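/- For (x1,x2) with β(x1,x2) ≠ 0, F(x1,x2) = P(x1,x2) D(x1,x2) P(x1,x2)^{-1}, where D = diag(√β/3, −√β/3), P = [[1, 1],[√β/(1+e^{-i x1}+e^{-i x2}), −(1+e^{i x1}+e^{i x2})/√β]], and P^{-1} = [[1/2, (1+e^{-i x1}+e^{-i x2})/(2√β)],[1/2, −(1+e^{-i x1}+e^{-i x2})/(2√β)]]. -/

import Mathlib

open Real Complex

noncomputable def hexF (x1 x2 : ℝ) : Matrix (Fin 2) (Fin 2) ℂ :=
  (1/3 : ℂ) •
    !![0, 1 + Complex.exp (-(Complex.I * x1)) + Complex.exp (-(Complex.I * x2));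
       1 + Complex.exp (Complex.I * x1) + Complex.exp (Complex.I * x2), 0]

noncomputable def hexβ (x1 x2 : ℝ) : ℝ :=
  3 + 2 * (Real.cos x1 + Real.cos x2 + Real.cos (x1 - x2))

noncomputable def hexD (x1 x2 : ℝ) : Matrix (Fin 2) (Fin 2) ℂ :=
  !![(Real.sqrt (hexβ x1 x2) : ℂ) / 3, 0;
     0, -((Real.sqrt (hexβ x1 x2) : ℂ) / 3)]

noncomputable def hexP (x1 x2 : ℝ) : Matrix (Fin 2) (Fin 2) ℂ :=
  !![1, 1;
     (Real.sqrt (hexβ x1 x2) : ℂ) /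
       (1 + Complex.exp (-(Complex.I * x1)) + Complex.exp (-(Complex.I * x2))),
     -((1 + Complex.exp (Complex.I * x1) + Complex.exp (Complex.I * x2)) /
       (Real.sqrt (hexβ x1 x2) : ℂ))]

noncomputable def hexPinv (x1 x2 : ℝ) : Matrix (Fin 2) (Fin 2) ℂ :=
  !![1/2, (1 + Complex.exp (-(Complex.I * x1)) + Complex.exp (-(Complex.I * x2))) /
          (2 * (Real.sqrt (hexβ x1 x2) : ℂ));
     1/2, -((1 + Complex.exp (-(Complex.I * x1)) + Complex.exp (-(Complex.I * x2))) /
          (2 * (Real.sqrt (hexβ x1 x2) : ℂ)))]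

set_option linter.unnecessarySeqFocus false

lemma hex_aux1 (a b s : ℂ) (hss : s * s = a * b) (hs : s ≠ 0) (hb : b ≠ 0) :
    (!![1, 1; s/b, -(a/s)] * !![1/2, b/(2*s); 1/2, -(b/(2*s))] : Matrix (Fin 2) (Fin 2) ℂ)
      = 1 := by
  have haeq : a = s * s / b := by rw [eq_div_iff hb, hss]
  subst haeq
  ext i j
  fin_cases i <;> fin_cases j <;>
    simp [Matrix.mul_apply, Fin.sum_univ_two] <;>
    field_simp <;>
    ring

set_option maxHeartbeats 1000000 in
lemma hex_aux2 (a b s : ℂ) (hss : s * s = a * b) (hs : s ≠ 0) (hb : b ≠ 0) :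
    ((1/3:ℂ) • !![0, b; a, 0] : Matrix (Fin 2) (Fin 2) ℂ) =
    !![1, 1; s/b, -(a/s)] * !![s/3, 0; 0, -(s/3)] * !![1/2, b/(2*s); 1/2, -(b/(2*s))] := by
  have haeq : a = s * s / b := by rw [eq_div_iff hb, hss]
  subst haeq
  ext i j
  fin_cases i <;> fin_cases j <;>
    simp [Matrix.mul_apply, Fin.sum_univ_two] <;>
    field_simp <;>
    ring_nf <;>
    field_simp <;>
    ring

theorem hexF_diagonalization (x1 x2 : ℝ) (hβ : hexβ x1 x2 ≠ 0) :
    hexP x1 x2 * hexPinv x1 x2 = 1 ∧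
    hexF x1 x2 = hexP x1 x2 * hexD x1 x2 * hexPinv x1 x2 := by
  set a : ℂ := 1 + Complex.exp (Complex.I * x1) + Complex.exp (Complex.I * x2) with ha_def
  set b : ℂ := 1 + Complex.exp (-(Complex.I * x1)) + Complex.exp (-(Complex.I * x2)) with hb_def
  set s : ℂ := (Real.sqrt (hexβ x1 x2) : ℂ) with hs_def
  have hab : a * b = (hexβ x1 x2 : ℂ) := by
    rw [ha_def, hb_def]
    simp only [hexβ]
    push_cast
    rw [Complex.cos, Complex.cos, Complex.cos]
    rw [show ((x1:ℂ) - x2) * Complex.I = Complex.I * x1 + -(Complex.I * x2) by ring,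
        show (-((x1:ℂ) - x2)) * Complex.I = Complex.I * x2 + -(Complex.I * x1) by ring,
        show ((x1:ℂ)) * Complex.I = Complex.I * x1 by ring,
        show ((x2:ℂ)) * Complex.I = Complex.I * x2 by ring,
        show (-(x1:ℂ)) * Complex.I = -(Complex.I * x1) by ring,
        show (-(x2:ℂ)) * Complex.I = -(Complex.I * x2) by ring,
        Complex.exp_add, Complex.exp_add]
    rw [Complex.exp_neg, Complex.exp_neg]
    have n1 := Complex.exp_ne_zero (Complex.I * x1)
    have n2 := Complex.exp_ne_zero (Complex.I * x2)
    field_simp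
    ring
  have hβnn : 0 ≤ hexβ x1 x2 := by
    have hbc : b = starRingEnd ℂ a := by
      rw [ha_def, hb_def]
      simp only [map_add, map_one, ← Complex.exp_conj, map_mul, Complex.conj_I,
        Complex.conj_ofReal]
      ring_nf
    rw [hbc, Complex.mul_conj] at hab
    have : hexβ x1 x2 = Complex.normSq a := by exact_mod_cast hab.symm
    rw [this]; exact Complex.normSq_nonneg _
  have hss : s * s = a * b := by
    rw [hab, hs_def, ← Complex.ofReal_mul, Real.mul_self_sqrt hβnn]
  have hs : s ≠ 0 := by
    rw [hs_def]
    exact_mod_cast Real.sqrt_ne_zero'.mpr (lt_of_le_of_ne hβnn (Ne.symm hβ))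
  have hb : b ≠ 0 := by
    intro h; apply hs; rw [← mul_self_eq_zero, hss, h, mul_zero]
  have hP : hexP x1 x2 = !![1, 1; s/b, -(a/s)] := by
    rw [hexP, ha_def, hb_def, hs_def]
  have hPinv : hexPinv x1 x2 = !![1/2, b/(2*s); 1/2, -(b/(2*s))] := by
    rw [hexPinv, hb_def, hs_def]
  have hD : hexD x1 x2 = !![s/3, 0; 0, -(s/3)] := by
    rw [hexD, hs_def]
  have hF : hexF x1 x2 = (1/3:ℂ) • !![0, b; a, 0] := by
    rw [hexF, ha_def, hb_def]
  rw [hP, hPinv, hD, hF]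
  exact ⟨hex_aux1 a b s hss hs hb, hex_aux2 a b s hss hs hb⟩
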